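/- Let N ≥ 2 and let y ∈ ℝ^N with y_1 > … > y_{N−1} > |y_N|. Define W_D(x) := 2 Σ_{1 ≤ i < j ≤ N} ln(x_i² − x_j²) − ‖x‖²/2 on the interior {x ∈ ℝ^N : x_1 > … > x_{N−1} > |x_N|} of C_N^D. Then W_D(x) ≤ W_D(y) for all x in this interior (i.e. W_D is maximal at y) if and only if y_N = 0 and 4 Σ_{j ≠ i} 1/(y_i² − y_j²) = 1 for every i = 1,…,N−1. -/

import Mathlib

set_option maxHeartbeats 1000000

lemma pairsum {N : ℕ} (v d : Fin N → ℝ) (hd : ∀ i j : Fin N, i ≠ j → d i ≠ d j) :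
    ∑ p ∈ Finset.univ.filter (fun p : Fin N × Fin N => p.1 < p.2),
        (v p.1 - v p.2) / (d p.1 - d p.2)
      = ∑ i, v i * ∑ j ∈ Finset.univ.erase i, 1 / (d i - d j) := by
  classical
  set q : Fin N × Fin N → ℝ := fun p => v p.1 / (d p.1 - d p.2) with hq
  have hsplit : ∀ p : Fin N × Fin N, p.1 ≠ p.2 →
      (v p.1 - v p.2) / (d p.1 - d p.2) = q p + q p.swap := by
    intro p hp
    have h1 : d p.1 - d p.2 ≠ 0 := sub_ne_zero.2 (hd _ _ hp)
    have h2 : d p.2 - d p.1 ≠ 0 := sub_ne_zero.2 (hd _ _ hp.symm)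
    simp only [hq, Prod.fst_swap, Prod.snd_swap]
    field_simp
    ring
  have hA : ∑ p ∈ Finset.univ.filter (fun p : Fin N × Fin N => p.1 < p.2),
        (v p.1 - v p.2) / (d p.1 - d p.2)
      = ∑ p ∈ Finset.univ.filter (fun p : Fin N × Fin N => p.1 < p.2), (q p + q p.swap) := by
    apply Finset.sum_congr rfl
    intro p hp
    simp only [Finset.mem_filter] at hp
    exact hsplit p (ne_of_lt hp.2)
  rw [hA, Finset.sum_add_distrib]
  have hB : ∑ p ∈ Finset.univ.filter (fun p : Fin N × Fin N => p.1 < p.2), q p.swap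
      = ∑ p ∈ Finset.univ.filter (fun p : Fin N × Fin N => p.2 < p.1), q p := by
    apply Finset.sum_nbij' (fun p => p.swap) (fun p => p.swap)
    · intro p hp; simp only [Finset.mem_filter, Finset.mem_univ, true_and] at hp ⊢; exact hp
    · intro p hp; simp only [Finset.mem_filter, Finset.mem_univ, true_and] at hp ⊢; exact hp
    · intro p _; exact Prod.swap_swap p
    · intro p _; exact Prod.swap_swap p
    · intro p _; rfl
  rw [hB]
  have hC : ∑ p ∈ Finset.univ.filter (fun p : Fin N × Fin N => p.1 < p.2), q p
        + ∑ p ∈ Finset.univ.filter (fun p : Fin N × Fin N => p.2 < p.1), q p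
      = ∑ p ∈ Finset.univ.filter (fun p : Fin N × Fin N => p.1 ≠ p.2), q p := by
    have := Finset.sum_filter_add_sum_filter_not
      (Finset.univ.filter (fun p : Fin N × Fin N => p.1 ≠ p.2))
      (fun p : Fin N × Fin N => p.1 < p.2) q
    rw [Finset.filter_filter, Finset.filter_filter] at this
    rw [← this]
    congr 1
    · refine Finset.sum_congr ?_ (fun _ _ => rfl)
      apply Finset.filter_congr; intro p _; constructor
      · intro h; exact ⟨ne_of_lt h, h⟩
      · intro h; exact h.2
    · refine Finset.sum_congr ?_ (fun _ _ => rfl)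
      apply Finset.filter_congr; intro p _; constructor
      · intro h; exact ⟨ne_of_gt h, fun hlt => absurd hlt (not_lt.2 (le_of_lt h))⟩
      · intro h; exact lt_of_le_of_ne (not_lt.1 h.2) (Ne.symm h.1)
  rw [hC]
  rw [Finset.sum_filter]
  rw [← Finset.univ_product_univ, Finset.sum_product]
  apply Finset.sum_congr rfl
  intro i _
  rw [Finset.mul_sum]
  rw [← Finset.sum_filter]
  have : Finset.univ.filter (fun j : Fin N => (i, j).1 ≠ (i, j).2) = Finset.univ.erase i := by
    ext j; simp [eq_comm, Ne]
  rw [this]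
  apply Finset.sum_congr rfl
  intro j _
  rw [mul_one_div]

lemma chamber_facts {N : ℕ} (hN : 2 ≤ N) (x : EuclideanSpace ℝ (Fin N))
    (hx1 : ∀ i j : Fin N, i < j → j.val + 1 < N → x j < x i)
    (hx2 : |x ⟨N - 1, by have := hN; omega⟩| < x ⟨N - 2, by have := hN; omega⟩) :
    (∀ i : Fin N, i.val + 1 < N → |x ⟨N - 1, by have := hN; omega⟩| < x i)
    ∧ (∀ i : Fin N, i.val + 1 < N → 0 < x i)
    ∧ (∀ i j : Fin N, i < j → x j ^ 2 < x i ^ 2) := by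
  have key : ∀ i : Fin N, i.val + 1 < N → |x ⟨N - 1, by have := hN; omega⟩| < x i := by
    intro i hi
    rcases eq_or_lt_of_le (show i.val ≤ N - 2 by omega) with h | h
    · have : i = ⟨N - 2, by have := hN; omega⟩ := Fin.ext h
      rw [this]; exact hx2
    · refine lt_trans hx2 (hx1 i ⟨N - 2, by have := hN; omega⟩ ?_ (by simp; omega))
      exact Fin.mk_lt_mk.mpr h |>.trans_le' (le_refl _) |>.trans_le (le_refl _)
  have pos : ∀ i : Fin N, i.val + 1 < N → 0 < x i :=
    fun i hi => lt_of_le_of_lt (abs_nonneg _) (key i hi)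
  refine ⟨key, pos, ?_⟩
  intro i j hij
  have hiN : i.val + 1 < N := by have := hij; rw [Fin.lt_def] at this; have := j.isLt; omega
  by_cases hj : j.val + 1 < N
  · have h1 : x j < x i := hx1 i j hij hj
    have h2 : 0 < x j := pos j hj
    exact pow_lt_pow_left₀ h1 h2.le (by norm_num)
  · have hjval : j.val = N - 1 := by have := j.isLt; omega
    have : j = ⟨N - 1, by have := hN; omega⟩ := Fin.ext hjval
    rw [this]
    have h1 : |x ⟨N - 1, by have := hN; omega⟩| < x i := key i hiN
    calc x ⟨N - 1, by have := hN; omega⟩ ^ 2 = |x ⟨N - 1, by have := hN; omega⟩| ^ 2 := (sq_abs _).symm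
    _ < x i ^ 2 := pow_lt_pow_left₀ h1 (abs_nonneg _) (by norm_num)

lemma log_le_aux (a b : ℝ) (ha : 0 < a) (hb : 0 < b) :
    Real.log b ≤ Real.log a + (b - a) / a := by
  have h1 : Real.log (b / a) ≤ b / a - 1 := Real.log_le_sub_one_of_pos (div_pos hb ha)
  rw [Real.log_div hb.ne' ha.ne'] at h1
  have h2 : (b - a) / a = b / a - 1 := by field_simp
  linarith

lemma norm_sq_eval {N : ℕ} (x : EuclideanSpace ℝ (Fin N)) : ‖x‖ ^ 2 = ∑ i, x i ^ 2 := by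
  rw [EuclideanSpace.norm_eq, Real.sq_sqrt (by positivity)]
  congr 1; ext i; rw [Real.norm_eq_abs, sq_abs]

lemma backward_aux {N : ℕ} (hN : 2 ≤ N) (x y : EuclideanSpace ℝ (Fin N))
    (hysq : ∀ i j : Fin N, i < j → y j ^ 2 < y i ^ 2)
    (hxsq : ∀ i j : Fin N, i < j → x j ^ 2 < x i ^ 2)
    (hylast : y ⟨N - 1, by have := hN; omega⟩ = 0)
    (hstat : ∀ i : Fin N, i.val + 1 < N →
        4 * (∑ j ∈ Finset.univ.erase i, 1 / (y i ^ 2 - y j ^ 2)) = 1) :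
    2 * (∑ p ∈ Finset.univ.filter (fun p : Fin N × Fin N => p.1 < p.2),
        Real.log (x p.1 ^ 2 - x p.2 ^ 2)) - (∑ i, x i ^ 2) / 2
      ≤ 2 * (∑ p ∈ Finset.univ.filter (fun p : Fin N × Fin N => p.1 < p.2),
        Real.log (y p.1 ^ 2 - y p.2 ^ 2)) - (∑ i, y i ^ 2) / 2 := by
  classical
  set u : Fin N → ℝ := fun i => x i ^ 2 - y i ^ 2 with hu
  set d : Fin N → ℝ := fun i => y i ^ 2 with hdd
  set s : Fin N → ℝ := fun i => ∑ j ∈ Finset.univ.erase i, 1 / (y i ^ 2 - y j ^ 2) with hs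
  have hd : ∀ i j : Fin N, i ≠ j → d i ≠ d j := by
    intro i j hij
    rcases lt_or_gt_of_ne hij with h | h
    · exact (hysq i j h).ne'
    · exact (hysq j i h).ne
  have hlog : ∀ p ∈ Finset.univ.filter (fun p : Fin N × Fin N => p.1 < p.2),
      Real.log (x p.1 ^ 2 - x p.2 ^ 2)
        ≤ Real.log (y p.1 ^ 2 - y p.2 ^ 2) + (u p.1 - u p.2) / (d p.1 - d p.2) := by
    intro p hp
    simp only [Finset.mem_filter, Finset.mem_univ, true_and] at hp
    have ha : (0:ℝ) < y p.1 ^ 2 - y p.2 ^ 2 := sub_pos.2 (hysq _ _ hp)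
    have hb : (0:ℝ) < x p.1 ^ 2 - x p.2 ^ 2 := sub_pos.2 (hxsq _ _ hp)
    have := log_le_aux _ _ ha hb
    have harr : (x p.1 ^ 2 - x p.2 ^ 2) - (y p.1 ^ 2 - y p.2 ^ 2) = u p.1 - u p.2 := by
      simp only [hu]; ring
    have hda : d p.1 - d p.2 = y p.1 ^ 2 - y p.2 ^ 2 := rfl
    rw [hda, ← harr]
    exact this
  have hsum := Finset.sum_le_sum hlog
  rw [Finset.sum_add_distrib] at hsum
  rw [pairsum u d hd] at hsum
  have hterm : ∀ i : Fin N, u i * ∑ j ∈ Finset.univ.erase i, 1 / (d i - d j) = u i * s i := by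
    intro i; simp only [hs, hdd]
  simp only [hterm] at hsum
  have hlin : 2 * (∑ i, u i * s i) - (∑ i, u i) / 2 ≤ 0 := by
    have heq : 2 * (∑ i, u i * s i) - (∑ i, u i) / 2
        = ∑ i, u i * (4 * s i - 1) / 2 := by
      rw [Finset.mul_sum, Finset.sum_div, ← Finset.sum_sub_distrib]
      apply Finset.sum_congr rfl
      intro i _; ring
    rw [heq]
    apply Finset.sum_nonpos
    intro i _
    by_cases hi : i.val + 1 < N
    · rw [hstat i hi]; simp
    · have hival : i = ⟨N - 1, by have := hN; omega⟩ := by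
        apply Fin.ext
        show i.val = N - 1
        have := i.isLt; omega
      have hu0 : 0 ≤ u i := by
        simp only [hu]
        rw [hival, hylast]
        nlinarith [sq_nonneg (x (⟨N - 1, Nat.sub_lt (by omega) one_pos⟩ : Fin N))]
      have hsneg : s i ≤ 0 := by
        apply Finset.sum_nonpos
        intro j hj
        have hji : j ≠ i := Finset.ne_of_mem_erase hj
        have : y i ^ 2 < y j ^ 2 := by
          rcases lt_or_gt_of_ne hji with h | h
          · exact hysq j i h
          · exfalso
            rw [hival] at h
            have h2 : N - 1 < j.val := h
            have := j.isLt; omega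
        have : y i ^ 2 - y j ^ 2 < 0 := by linarith
        exact le_of_lt (div_neg_of_pos_of_neg one_pos this)
      have hle : u i * (4 * s i - 1) ≤ 0 :=
        mul_nonpos_of_nonneg_of_nonpos hu0 (by linarith)
      exact div_nonpos_of_nonpos_of_nonneg hle (by norm_num)
  have hux : ∑ i, u i = (∑ i, x i ^ 2) - ∑ i, y i ^ 2 := by
    rw [← Finset.sum_sub_distrib]
  linarith

lemma forward_deriv {N : ℕ} (y : EuclideanSpace ℝ (Fin N))
    (hpos : ∀ p : Fin N × Fin N, p.1 < p.2 → (0:ℝ) < y p.1 ^ 2 - y p.2 ^ 2)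
    (c : Fin N → ℝ)
    (g : ℝ → ℝ)
    (hg : g = fun t => 2 * (∑ p ∈ Finset.univ.filter (fun p : Fin N × Fin N => p.1 < p.2),
        Real.log ((y p.1 + t * c p.1) ^ 2 - (y p.2 + t * c p.2) ^ 2))
        - (∑ i, (y i + t * c i) ^ 2) / 2)
    (hmax : IsLocalMax g 0) :
    2 * (∑ p ∈ Finset.univ.filter (fun p : Fin N × Fin N => p.1 < p.2),
        (2 * y p.1 * c p.1 - 2 * y p.2 * c p.2) / (y p.1 ^ 2 - y p.2 ^ 2))
      - (∑ i, 2 * y i * c i) / 2 = 0 := by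
  have hcoord : ∀ i : Fin N, HasDerivAt (fun t : ℝ => y i + t * c i) (c i) 0 := by
    intro i
    simpa using ((hasDerivAt_id (0:ℝ)).mul_const (c i)).const_add (y i)
  have hsq : ∀ i : Fin N, HasDerivAt (fun t : ℝ => (y i + t * c i) ^ 2) (2 * y i * c i) 0 := by
    intro i
    have := (hcoord i).fun_pow 2
    simpa using this
  have hlogterm : ∀ p : Fin N × Fin N, p.1 < p.2 →
      HasDerivAt (fun t : ℝ => Real.log ((y p.1 + t * c p.1) ^ 2 - (y p.2 + t * c p.2) ^ 2))
        ((2 * y p.1 * c p.1 - 2 * y p.2 * c p.2) / (y p.1 ^ 2 - y p.2 ^ 2)) 0 := by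
    intro p hp
    have hin : HasDerivAt (fun t : ℝ => (y p.1 + t * c p.1) ^ 2 - (y p.2 + t * c p.2) ^ 2)
        (2 * y p.1 * c p.1 - 2 * y p.2 * c p.2) 0 := (hsq p.1).sub (hsq p.2)
    have hne : (y p.1 + 0 * c p.1) ^ 2 - (y p.2 + 0 * c p.2) ^ 2 ≠ 0 := by
      simpa using (hpos p hp).ne'
    have := hin.log (by simpa using hne)
    simpa using this
  have hsum1 : HasDerivAt (fun t : ℝ => ∑ p ∈ Finset.univ.filter
        (fun p : Fin N × Fin N => p.1 < p.2),
        Real.log ((y p.1 + t * c p.1) ^ 2 - (y p.2 + t * c p.2) ^ 2))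
      (∑ p ∈ Finset.univ.filter (fun p : Fin N × Fin N => p.1 < p.2),
        (2 * y p.1 * c p.1 - 2 * y p.2 * c p.2) / (y p.1 ^ 2 - y p.2 ^ 2)) 0 := by
    apply HasDerivAt.fun_sum
    intro p hp
    simp only [Finset.mem_filter, Finset.mem_univ, true_and] at hp
    exact hlogterm p hp
  have hsum2 : HasDerivAt (fun t : ℝ => ∑ i, (y i + t * c i) ^ 2)
      (∑ i, 2 * y i * c i) 0 := HasDerivAt.fun_sum (fun i _ => hsq i)
  have hg' : HasDerivAt g
      (2 * (∑ p ∈ Finset.univ.filter (fun p : Fin N × Fin N => p.1 < p.2),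
        (2 * y p.1 * c p.1 - 2 * y p.2 * c p.2) / (y p.1 ^ 2 - y p.2 ^ 2))
        - (∑ i, 2 * y i * c i) / 2) 0 := by
    rw [hg]
    exact ((hsum1.const_mul 2).sub (hsum2.div_const 2))
  rw [← hg'.deriv]
  exact hmax.deriv_eq_zero

/-- For `N ≥ 2` and `y` in the interior
`{x : x_1 > ⋯ > x_{N−1} > |x_N|}` of the Weyl chamber of type `D`, the function
`W_D(x) = 2 ∑_{i<j} ln(x_i² − x_j²) − ‖x‖²/2` is maximal at `y` (among points of the
interior) if and only if `y_N = 0` and `4 ∑_{j ≠ i} 1/(y_i² − y_j²) = 1` for every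
`i = 1, …, N−1`. -/
theorem WD_max_iff_stationary (N : ℕ) (hN : 2 ≤ N)
    (y : EuclideanSpace ℝ (Fin N))
    (hy : (∀ i j : Fin N, i < j → j.val + 1 < N → y j < y i)
      ∧ |y ⟨N - 1, by omega⟩| < y ⟨N - 2, by omega⟩)
    (W : EuclideanSpace ℝ (Fin N) → ℝ)
    (hW : ∀ x, W x = 2 * (∑ p ∈ Finset.univ.filter (fun p : Fin N × Fin N => p.1 < p.2),
        Real.log (x p.1 ^ 2 - x p.2 ^ 2)) - ‖x‖ ^ 2 / 2) :
    (∀ x : EuclideanSpace ℝ (Fin N),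
        ((∀ i j : Fin N, i < j → j.val + 1 < N → x j < x i)
          ∧ |x ⟨N - 1, by omega⟩| < x ⟨N - 2, by omega⟩) → W x ≤ W y)
      ↔ (y ⟨N - 1, by omega⟩ = 0
          ∧ ∀ i : Fin N, i.val + 1 < N →
              4 * (∑ j ∈ Finset.univ.erase i, 1 / (y i ^ 2 - y j ^ 2)) = 1) := by
  classical
  obtain ⟨hy1, hy2⟩ := hy
  obtain ⟨hkey, hposy, hysq⟩ := chamber_facts hN y hy1 hy2
  constructor
  · intro hmax
    -- Step 1: stationarity of each coordinate slice
    have stat : ∀ k : Fin N,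
        y k * (4 * (∑ j ∈ Finset.univ.erase k, 1 / (y k ^ 2 - y j ^ 2)) - 1) = 0 := by
      intro k
      set c : Fin N → ℝ := fun i => if i = k then 1 else 0 with hc
      set g : ℝ → ℝ := fun t => W (y + t • EuclideanSpace.single k (1:ℝ)) with hgdef
      have happ : ∀ (t : ℝ) (i : Fin N),
          (y + t • EuclideanSpace.single k (1:ℝ)) i = y i + t * c i := by
        intro t i
        simp [hc, EuclideanSpace.single_apply]
      have hgeq : g = fun t => 2 * (∑ p ∈ Finset.univ.filter
            (fun p : Fin N × Fin N => p.1 < p.2),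
            Real.log ((y p.1 + t * c p.1) ^ 2 - (y p.2 + t * c p.2) ^ 2))
          - (∑ i, (y i + t * c i) ^ 2) / 2 := by
        funext t
        rw [hgdef]
        simp only []
        rw [hW, norm_sq_eval]
        simp only [happ]
      -- local max of g at 0
      have hmem : ∀ᶠ t in nhds (0:ℝ),
          ((∀ i j : Fin N, i < j → j.val + 1 < N →
              (y + t • EuclideanSpace.single k (1:ℝ)) j
                < (y + t • EuclideanSpace.single k (1:ℝ)) i)
            ∧ |(y + t • EuclideanSpace.single k (1:ℝ)) ⟨N - 1, by omega⟩|
                < (y + t • EuclideanSpace.single k (1:ℝ)) ⟨N - 2, by omega⟩) := by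
        have hcont : ∀ i : Fin N, ContinuousAt
            (fun t : ℝ => (y + t • EuclideanSpace.single k (1:ℝ)) i) 0 := by
          intro i
          simp only [PiLp.add_apply, PiLp.smul_apply, smul_eq_mul]
          fun_prop
        have h0 : ∀ i : Fin N, (y + (0:ℝ) • EuclideanSpace.single k (1:ℝ)) i = y i := by
          intro i; simp
        apply Filter.Eventually.and
        · rw [Filter.eventually_all]
          intro i
          rw [Filter.eventually_all]
          intro j
          by_cases hij : i < j
          · by_cases hjN : j.val + 1 < N
            · have := (hcont j).eventually_lt (hcont i)
                (by rw [h0 i, h0 j]; exact hy1 i j hij hjN)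
              filter_upwards [this] with t ht _ _
              exact ht
            · filter_upwards with t _ h; exact absurd h hjN
          · filter_upwards with t h; exact absurd h hij
        · have habs : ContinuousAt (fun t : ℝ =>
              |(y + t • EuclideanSpace.single k (1:ℝ)) ⟨N - 1, by omega⟩|) 0 :=
            (hcont ⟨N - 1, by omega⟩).abs
          exact habs.eventually_lt (hcont ⟨N - 2, by omega⟩)
            (by simp only [h0]; exact hy2)
      have hg0 : g 0 = W y := by
        rw [hgdef]; simp
      have hloc : IsLocalMax g 0 := by
        filter_upwards [hmem] with t ht
        rw [hg0]
        exact hmax _ ht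
      have hpos : ∀ p : Fin N × Fin N, p.1 < p.2 → (0:ℝ) < y p.1 ^ 2 - y p.2 ^ 2 :=
        fun p hp => sub_pos.2 (hysq _ _ hp)
      have hder := forward_deriv y hpos c g hgeq hloc
      -- simplify the two sums
      have hps := pairsum (fun i => 2 * y i * c i) (fun i => y i ^ 2)
        (by
          intro i j hij
          rcases lt_or_gt_of_ne hij with h | h
          · exact (hysq i j h).ne'
          · exact (hysq j i h).ne)
      simp only [] at hps
      rw [hps] at hder
      have h2 : ∑ i, 2 * y i * c i * (∑ j ∈ Finset.univ.erase i, 1 / (y i ^ 2 - y j ^ 2))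
          = 2 * y k * (∑ j ∈ Finset.univ.erase k, 1 / (y k ^ 2 - y j ^ 2)) := by
        rw [Finset.sum_eq_single k]
        · simp [hc]
        · intro b _ hbk; simp [hc, hbk]
        · intro h; exact absurd (Finset.mem_univ k) h
      have h3 : ∑ i, 2 * y i * c i = 2 * y k := by
        rw [Finset.sum_eq_single k]
        · simp [hc]
        · intro b _ hbk; simp [hc, hbk]
        · intro h; exact absurd (Finset.mem_univ k) h
      rw [h2, h3] at hder
      linear_combination hder
    constructor
    · -- y at last index is zero
      have hlast := stat ⟨N - 1, by omega⟩
      rcases mul_eq_zero.1 hlast with h | h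
      · exact h
      · exfalso
        have hsneg : (∑ j ∈ Finset.univ.erase (⟨N - 1, by omega⟩ : Fin N),
            1 / (y ⟨N - 1, by omega⟩ ^ 2 - y j ^ 2)) ≤ 0 := by
          apply Finset.sum_nonpos
          intro j hj
          have hji : j ≠ ⟨N - 1, by omega⟩ := Finset.ne_of_mem_erase hj
          have hjlt : j < (⟨N - 1, by omega⟩ : Fin N) := by
            rw [Fin.lt_def]
            show j.val < N - 1
            have h1 : j.val ≠ N - 1 := fun hc => hji (Fin.ext hc)
            have := j.isLt; omega
          have : y ⟨N - 1, by omega⟩ ^ 2 < y j ^ 2 := hysq j _ hjlt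
          have hneg : y ⟨N - 1, by omega⟩ ^ 2 - y j ^ 2 < 0 := by linarith
          exact le_of_lt (div_neg_of_pos_of_neg one_pos hneg)
        linarith
    · intro i hi
      have := stat i
      rcases mul_eq_zero.1 this with h | h
      · exact absurd h (hposy i hi).ne'
      · linarith
  · rintro ⟨hlast, hstat⟩ x hx
    obtain ⟨_, _, hxsq⟩ := chamber_facts hN x hx.1 hx.2
    rw [hW x, hW y, norm_sq_eval, norm_sq_eval]
    exact backward_aux hN x y hysq hxsq hlast hstat
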